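/- Let y₁ < y₂, let u : [y₁,y₂] → ℝ be twice continuously differentiable with u(y₁) = u_min := min_{[y₁,y₂]} u and u'(y₁) ≠ 0, and let α > 0 and β ∈ ℝ. Then there exists δ₀ ∈ (0, y₂−y₁) such that for every δ ∈ (0,δ₀] the following holds: if φ : (y₁, y₁+δ] → ℝ is twice continuously differentiable, satisfies −φ''(y) + ((u''(y)−β)/(u(y)−u_min)) φ(y) = −α² φ(y) for all y ∈ (y₁, y₁+δ], and ∫_{y₁}^{y₁+δ} φ(y)²/(y−y₁)³ dy < ∞, then both limits lim_{y→y₁⁺} φ(y) and lim_{y→y₁⁺} φ'(y) exist and are equal to 0. -/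

import Mathlib

open Set Filter Topology MeasureTheory
open intervalIntegral

private lemma shift_intervalIntegrable (a : ℝ) {r : ℝ} (hr : -1 < r) (s b : ℝ) :
    IntervalIntegrable (fun t => (t - a) ^ r) volume s b := by
  simpa using (intervalIntegrable_rpow' (a := s - a) (b := b - a) hr).comp_sub_right a

private lemma shift_integral_rpow (a : ℝ) {r : ℝ} (hr : -1 < r) (s b : ℝ) :
    ∫ t in s..b, (t - a) ^ r = ((b - a) ^ (r + 1) - (s - a) ^ (r + 1)) / (r + 1) := by
  rw [intervalIntegral.integral_comp_sub_right (fun t => t ^ r) a,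
    integral_rpow (Or.inl hr)]

private lemma not_integrable_inv_shift {a c m : ℝ} (hac : a < c) (hm : 0 < m) {f : ℝ → ℝ}
    (hf : IntegrableOn f (Ioo a c))
    (hbd : ∀ s ∈ Ioo a c, m * (s - a)⁻¹ ≤ f s) : False := by
  have h1 : IntegrableOn (fun s => m * (s - a)⁻¹) (Ioo a c) := by
    refine hf.mono' ?_ ?_
    · exact (((measurable_id.sub_const a).inv.const_mul m).aestronglyMeasurable)
    · refine (ae_restrict_iff' measurableSet_Ioo).2 (Eventually.of_forall fun s hs => ?_)
      have h0 : 0 < (s - a)⁻¹ := inv_pos.2 (by linarith [hs.1])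
      have := hbd s hs
      rw [Real.norm_eq_abs, abs_of_nonneg (by positivity)]
      exact this
  have h2 : IntegrableOn (fun s => (s - a)⁻¹) (Ioo a c) := by
    refine IntegrableOn.congr_fun (h1.const_mul m⁻¹) (fun s _ => ?_) measurableSet_Ioo
    field_simp
  rw [← intervalIntegrable_iff_integrableOn_Ioo_of_le hac.le] at h2
  have h3 := h2.comp_add_right a
  have h4 : IntervalIntegrable (fun x : ℝ => x⁻¹) volume 0 (c - a) := by
    simpa using h3
  rw [intervalIntegrable_iff_integrableOn_Ioo_of_le (by linarith)] at h4
  have h5 : IntegrableOn (fun x : ℝ => x ^ (-1 : ℝ)) (Ioo 0 (c - a)) := by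
    refine IntegrableOn.congr_fun h4 (fun x hx => ?_) measurableSet_Ioo
    rw [Real.rpow_neg_one]
  have := (integrableOn_Ioo_rpow_iff (by linarith : (0:ℝ) < c - a)).1 h5
  linarith

private lemma ftc_aux {a b : ℝ} {f f' : ℝ → ℝ}
    (hd : ∀ y ∈ Ioc a b, HasDerivWithinAt f (f' y) (Ioc a b) y)
    (hc : ContinuousOn f' (Ioc a b)) {s : ℝ} (hs : s ∈ Ioc a b) :
    ∫ t in s..b, f' t = f b - f s := by
  have hsub : Icc s b ⊆ Ioc a b := fun t ht => ⟨hs.1.trans_le ht.1, ht.2⟩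
  apply integral_eq_sub_of_hasDeriv_right_of_le hs.2
  · exact fun y hy => ((hd y (hsub hy)).continuousWithinAt).mono hsub
  · intro x hx
    have hx' : x ∈ Ioc a b := ⟨hs.1.trans hx.1, hx.2.le⟩
    exact ((hd x hx').hasDerivAt (Ioc_mem_nhds hx'.1 hx.2)).hasDerivWithinAt
  · exact ContinuousOn.intervalIntegrable (by rw [uIcc_of_le hs.2]; exact hc.mono hsub)

private lemma taylor_aux {a b : ℝ} {φ φ' φ'' : ℝ → ℝ}
    (h1 : ∀ y ∈ Ioc a b, HasDerivWithinAt φ (φ' y) (Ioc a b) y)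
    (h2 : ∀ y ∈ Ioc a b, HasDerivWithinAt φ' (φ'' y) (Ioc a b) y)
    (h2c : ContinuousOn φ'' (Ioc a b)) {s : ℝ} (hs : s ∈ Ioc a b) :
    φ s = φ b - φ' b * (b - s) + ∫ t in s..b, (t - s) * φ'' t := by
  have hsub : Icc s b ⊆ Ioc a b := fun t ht => ⟨hs.1.trans_le ht.1, ht.2⟩
  have key : ∫ t in s..b, -((t - s) * φ'' t)
      = (φ b - φ' b * (b - s)) - (φ s - φ' s * (s - s)) := by
    apply integral_eq_sub_of_hasDeriv_right_of_le (f := fun t => φ t - φ' t * (t - s)) hs.2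
    · refine fun y hy => (((h1 y (hsub hy)).continuousWithinAt).mono hsub).sub
        ((((h2 y (hsub hy)).continuousWithinAt.mono hsub)).mul ?_)
      exact (continuous_id.sub continuous_const).continuousWithinAt
    · intro x hx
      have hx' : x ∈ Ioc a b := ⟨hs.1.trans hx.1, hx.2.le⟩
      have hm : Ioc a b ∈ 𝓝 x := Ioc_mem_nhds hx'.1 hx.2
      have d1 := (h1 x hx').hasDerivAt hm
      have d2 := (h2 x hx').hasDerivAt hm
      have d3 := d1.sub (d2.mul ((hasDerivAt_id x).sub_const s))
      simp only [id] at d3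
      have d4 : HasDerivAt (fun t => φ t - φ' t * (t - s)) (-((x - s) * φ'' x)) x := by
        exact d3.congr_deriv (by ring)
      exact d4.hasDerivWithinAt
    · refine ContinuousOn.intervalIntegrable ?_
      rw [uIcc_of_le hs.2]
      exact (((continuous_id.sub continuous_const).continuousOn.mul (h2c.mono hsub)).neg)
  rw [intervalIntegral.integral_neg, sub_self, mul_zero, sub_zero] at key
  linarith

private lemma primitive_limit {a b : ℝ} (hab : a < b) {f f' : ℝ → ℝ}
    (hd : ∀ y ∈ Ioc a b, HasDerivWithinAt f (f' y) (Ioc a b) y)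
    (hc : ContinuousOn f' (Ioc a b))
    (hint : IntegrableOn f' (Ioc a b)) :
    (∀ s ∈ Ioc a b, f s = (f b - ∫ t in a..b, f' t) + ∫ t in a..s, f' t) ∧
    Tendsto f (𝓝[>] a) (𝓝 (f b - ∫ t in a..b, f' t)) := by
  have hIcc : IntegrableOn f' (Icc a b) := by
    rwa [integrableOn_Icc_iff_integrableOn_Ioc]
  have hg1c : ContinuousOn (fun x => ∫ t in a..x, f' t) (Icc a b) := by
    have := intervalIntegral.continuousOn_primitive_interval
      (μ := volume) (a := a) (b := b) (f := f') (by rwa [uIcc_of_le hab.le])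
    rwa [uIcc_of_le hab.le] at this
  have hrep : ∀ s ∈ Ioc a b, f s = (f b - ∫ t in a..b, f' t) + ∫ t in a..s, f' t := by
    intro s hs
    have h5 := ftc_aux hd hc hs
    have int1 : IntervalIntegrable f' volume a s := by
      rw [intervalIntegrable_iff_integrableOn_Ioc_of_le hs.1.le]
      exact hint.mono_set (Ioc_subset_Ioc_right hs.2)
    have int2 : IntervalIntegrable f' volume s b := by
      rw [intervalIntegrable_iff_integrableOn_Ioc_of_le hs.2]
      exact hint.mono_set (Ioc_subset_Ioc_left hs.1.le)
    have hadd := intervalIntegral.integral_add_adjacent_intervals int1 int2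
    linarith
  refine ⟨hrep, ?_⟩
  have htg : Tendsto (fun x => ∫ t in a..x, f' t) (𝓝[>] a) (𝓝 0) := by
    have h6 : ContinuousWithinAt (fun x => ∫ t in a..x, f' t) (Icc a b) a :=
      hg1c a (left_mem_Icc.2 hab.le)
    have h7 : Tendsto (fun x => ∫ t in a..x, f' t) (𝓝[Icc a b] a) (𝓝 0) := by
      simpa [intervalIntegral.integral_same] using h6.tendsto
    rw [← nhdsWithin_Ioc_eq_nhdsGT hab]
    exact h7.mono_left (nhdsWithin_mono a Ioc_subset_Icc_self)
  have hev : ∀ᶠ s in 𝓝[>] a, s ∈ Ioc a b := by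
    rw [← nhdsWithin_Ioc_eq_nhdsGT hab]
    exact self_mem_nhdsWithin
  have h8 : Tendsto (fun s => (f b - ∫ t in a..b, f' t) + ∫ t in a..s, f' t)
      (𝓝[>] a) (𝓝 ((f b - ∫ t in a..b, f' t) + 0)) := tendsto_const_nhds.add htg
  rw [add_zero] at h8
  exact h8.congr' (hev.mono fun s hs => (hrep s hs).symm)

set_option maxHeartbeats 2000000 in
private lemma aux_main {a b : ℝ} (hab : a < b) {C : ℝ} (hC : 0 ≤ C) (hCb : C * (b - a) ≤ 1/2)
    {φ φ' φ'' : ℝ → ℝ}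
    (h1 : ∀ y ∈ Ioc a b, HasDerivWithinAt φ (φ' y) (Ioc a b) y)
    (h2 : ∀ y ∈ Ioc a b, HasDerivWithinAt φ' (φ'' y) (Ioc a b) y)
    (h2c : ContinuousOn φ'' (Ioc a b))
    (hbnd : ∀ y ∈ Ioc a b, |φ'' y| ≤ C * |φ y| / (y - a))
    (hint : IntegrableOn (fun y => φ y ^ 2 / (y - a) ^ 3) (Ioo a b)) :
    Tendsto φ (𝓝[>] a) (𝓝 0) ∧ Tendsto φ' (𝓝[>] a) (𝓝 0) := by
  have hba : (0:ℝ) ≤ b - a := by linarith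
  have hφc : ContinuousOn φ (Ioc a b) := fun y hy => (h1 y hy).continuousWithinAt
  have hφ'c : ContinuousOn φ' (Ioc a b) := fun y hy => (h2 y hy).continuousWithinAt
  set A := |φ b| + |φ' b| * (b - a) with hA
  have hA0 : 0 ≤ A := by positivity
  -- Step 2 : global bound
  have hB : ∀ s ∈ Ioc a b, |φ s| ≤ 2 * A := by
    intro s hs
    have hsub : Icc s b ⊆ Ioc a b := fun t ht => ⟨hs.1.trans_le ht.1, ht.2⟩
    obtain ⟨t₀, ht₀K, ht₀max⟩ := isCompact_Icc.exists_isMaxOn (nonempty_Icc.2 hs.2)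
      ((hφc.mono hsub).abs)
    have ht₀ : t₀ ∈ Ioc a b := hsub ht₀K
    have hmax : ∀ x ∈ Icc s b, |φ x| ≤ |φ t₀| := fun x hx => ht₀max hx
    have htay := taylor_aux h1 h2 h2c ht₀
    have hIb : |∫ t in t₀..b, (t - t₀) * φ'' t| ≤ C * |φ t₀| * |b - t₀| := by
      rw [← Real.norm_eq_abs]
      apply intervalIntegral.norm_integral_le_of_norm_le_const
      intro x hx
      rw [uIoc_of_le ht₀.2] at hx
      have hx' : x ∈ Ioc a b := ⟨ht₀.1.trans hx.1, hx.2⟩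
      have hxa : 0 < x - a := by linarith [hx'.1]
      have e1 : |φ x| ≤ |φ t₀| := hmax x ⟨ht₀K.1.trans hx.1.le, hx.2⟩
      have h5 : (x - t₀) / (x - a) ≤ 1 := div_le_one_of_le₀ (by linarith [ht₀.1]) hxa.le
      calc ‖(x - t₀) * φ'' x‖ = (x - t₀) * |φ'' x| := by
            rw [Real.norm_eq_abs, abs_mul, abs_of_nonneg (by linarith [hx.1.le] : (0:ℝ) ≤ x - t₀)]
        _ ≤ (x - t₀) * (C * |φ x| / (x - a)) :=
            mul_le_mul_of_nonneg_left (hbnd x hx') (by linarith [hx.1.le])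
        _ = ((x - t₀) / (x - a)) * (C * |φ x|) := by ring
        _ ≤ 1 * (C * |φ x|) := mul_le_mul_of_nonneg_right h5 (by positivity)
        _ = C * |φ x| := one_mul _
        _ ≤ C * |φ t₀| := mul_le_mul_of_nonneg_left e1 hC
    have habs : |φ t₀| ≤ A + C * |φ t₀| * (b - t₀) := by
      rw [abs_of_nonneg (by linarith [ht₀.2] : (0:ℝ) ≤ b - t₀)] at hIb
      calc |φ t₀| = |φ b - φ' b * (b - t₀) + ∫ t in t₀..b, (t - t₀) * φ'' t| := by rw [← htay]
        _ ≤ |φ b - φ' b * (b - t₀)| + |∫ t in t₀..b, (t - t₀) * φ'' t| := abs_add_le _ _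
        _ ≤ (|φ b| + |φ' b| * |b - t₀|) + C * |φ t₀| * (b - t₀) := by
            refine add_le_add ((abs_sub _ _).trans ?_) hIb
            rw [abs_mul]
        _ ≤ A + C * |φ t₀| * (b - t₀) := by
            refine add_le_add ?_ le_rfl
            rw [hA, abs_of_nonneg (by linarith [ht₀.2] : (0:ℝ) ≤ b - t₀)]
            have : |φ' b| * (b - t₀) ≤ |φ' b| * (b - a) :=
              mul_le_mul_of_nonneg_left (by linarith [ht₀.1]) (abs_nonneg _)
            linarith
    have hhalf : C * (b - t₀) ≤ 1 / 2 := by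
      refine le_trans ?_ hCb
      exact mul_le_mul_of_nonneg_left (by linarith [ht₀.1]) hC
    have ht0 : |φ t₀| ≤ 2 * A := by
      nlinarith [abs_nonneg (φ t₀), mul_le_mul_of_nonneg_left hhalf (abs_nonneg (φ t₀))]
    exact (hmax s ⟨le_rfl, hs.2⟩).trans ht0
  -- Step 3 : derivative bound
  set D := |φ' b| with hD
  set E := 2 * C * (2 * A) * (b - a) ^ ((1/2 : ℝ)) with hE
  have hE0 : 0 ≤ E := by positivity
  have hintpow : ∀ s t : ℝ, IntervalIntegrable (fun t => (t - a) ^ (-(1/2) : ℝ)) volume s t :=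
    fun s t => shift_intervalIntegrable a (by norm_num) s t
  have hφ'bnd : ∀ s ∈ Ioc a b, |φ' s| ≤ D + E * (s - a) ^ (-(1/2) : ℝ) := by
    intro s hs
    have hsa : 0 < s - a := by linarith [hs.1]
    have hfs := ftc_aux h2 h2c hs
    have hb1 : |∫ t in s..b, φ'' t|
        ≤ |∫ t in s..b, (C * (2*A) * (s - a) ^ (-(1/2):ℝ)) * (t - a) ^ (-(1/2):ℝ)| := by
      rw [← Real.norm_eq_abs]
      refine intervalIntegral.norm_integral_le_abs_of_norm_le ?_ ((hintpow s b).const_mul _)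
      refine (ae_restrict_iff' measurableSet_uIoc).2 (Eventually.of_forall fun t ht => ?_)
      rw [uIoc_of_le hs.2] at ht
      have ht' : t ∈ Ioc a b := ⟨hs.1.trans ht.1, ht.2⟩
      have hta : 0 < t - a := by linarith [ht'.1]
      have e2 : (t - a)⁻¹ = (t - a) ^ (-(1/2):ℝ) * (t - a) ^ (-(1/2):ℝ) := by
        rw [← Real.rpow_add hta]
        norm_num [Real.rpow_neg_one]
      have e3 : (t - a) ^ (-(1/2):ℝ) ≤ (s - a) ^ (-(1/2):ℝ) :=
        Real.rpow_le_rpow_of_nonpos hsa (by linarith [ht.1]) (by norm_num)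
      have e5 : 0 ≤ (t - a) ^ (-(1/2):ℝ) := Real.rpow_nonneg hta.le _
      calc ‖φ'' t‖ ≤ C * |φ t| / (t - a) := by rw [Real.norm_eq_abs]; exact hbnd t ht'
        _ ≤ C * (2*A) / (t - a) := by
            gcongr
            exact hB t ht'
        _ = C * (2*A) * ((t - a) ^ (-(1/2):ℝ) * (t - a) ^ (-(1/2):ℝ)) := by
            rw [div_eq_mul_inv, e2]
        _ ≤ C * (2*A) * ((s - a) ^ (-(1/2):ℝ) * (t - a) ^ (-(1/2):ℝ)) := by
            refine mul_le_mul_of_nonneg_left (mul_le_mul_of_nonneg_right e3 e5) (by positivity)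
        _ = C * (2*A) * (s - a) ^ (-(1/2):ℝ) * (t - a) ^ (-(1/2):ℝ) := by ring
    have hval : ∫ t in s..b, (C * (2*A) * (s - a) ^ (-(1/2):ℝ)) * (t - a) ^ (-(1/2):ℝ)
        = (C * (2*A) * (s - a) ^ (-(1/2):ℝ)) * (((b-a) ^ ((1/2):ℝ) - (s-a) ^ ((1/2):ℝ)) / (1/2)) := by
      rw [intervalIntegral.integral_const_mul, shift_integral_rpow a (by norm_num)]
      norm_num
    have hmono : (s - a) ^ ((1/2):ℝ) ≤ (b - a) ^ ((1/2):ℝ) :=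
      Real.rpow_le_rpow hsa.le (by linarith [hs.2]) (by norm_num)
    have hcst : 0 ≤ C * (2*A) * (s - a) ^ (-(1/2):ℝ) := by positivity
    have hb2 : |∫ t in s..b, (C * (2*A) * (s - a) ^ (-(1/2):ℝ)) * (t - a) ^ (-(1/2):ℝ)|
        ≤ E * (s - a) ^ (-(1/2):ℝ) := by
      rw [hval, abs_of_nonneg (mul_nonneg hcst
        (div_nonneg (sub_nonneg.2 hmono) (by norm_num)))]
      have h9 : ((b-a) ^ ((1/2):ℝ) - (s-a) ^ ((1/2):ℝ)) / (1/2) ≤ 2 * (b-a) ^ ((1/2):ℝ) := by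
        have h10 : 0 ≤ (s-a) ^ ((1/2):ℝ) := Real.rpow_nonneg hsa.le _
        rw [div_le_iff₀ (by norm_num : (0:ℝ) < 1/2)]
        nlinarith [Real.rpow_nonneg hba ((1/2):ℝ)]
      calc C * (2*A) * (s - a) ^ (-(1/2):ℝ) * (((b-a) ^ ((1/2):ℝ) - (s-a) ^ ((1/2):ℝ)) / (1/2))
          ≤ C * (2*A) * (s - a) ^ (-(1/2):ℝ) * (2 * (b-a) ^ ((1/2):ℝ)) :=
            mul_le_mul_of_nonneg_left h9 hcst
        _ = E * (s - a) ^ (-(1/2):ℝ) := by rw [hE]; ring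
    have : |φ' s| ≤ |φ' b| + |∫ t in s..b, φ'' t| := by
      have : φ' s = φ' b - ∫ t in s..b, φ'' t := by linarith
      rw [this]
      exact (abs_sub _ _)
    exact this.trans (by linarith [hb1.trans hb2])
  -- Step 4 : φ' integrable
  have hdomint : IntegrableOn (fun t => D + E * (t - a) ^ (-(1/2):ℝ)) (Ioc a b) := by
    rw [← intervalIntegrable_iff_integrableOn_Ioc_of_le hab.le]
    exact intervalIntegrable_const.add ((hintpow a b).const_mul E)
  have hφ'int : IntegrableOn φ' (Ioc a b) := by
    refine hdomint.mono' (hφ'c.aestronglyMeasurable measurableSet_Ioc) ?_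
    refine (ae_restrict_iff' measurableSet_Ioc).2 (Eventually.of_forall fun s hs => ?_)
    rw [Real.norm_eq_abs]
    exact hφ'bnd s hs
  -- Step 5 : limit of φ
  obtain ⟨hrep, htend⟩ := primitive_limit hab h1 hφ'c hφ'int
  set L := φ b - ∫ t in a..b, φ' t with hLdef
  clear_value L
  have hev : ∀ᶠ s in 𝓝[>] a, s ∈ Ioc a b := by
    rw [← nhdsWithin_Ioc_eq_nhdsGT hab]
    exact self_mem_nhdsWithin
  -- Step 6 : L = 0
  have hL0 : L = 0 := by
    by_contra hL
    have hLpos : 0 < |L| := abs_pos.2 hL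
    have hev2 : ∀ᶠ s in 𝓝[>] a, |L| / 2 ≤ |φ s| := by
      have h11 : ∀ᶠ x in 𝓝 L, |L| / 2 ≤ |x| := by
        have : IsOpen {x : ℝ | |L| / 2 < |x|} := isOpen_lt continuous_const continuous_abs
        filter_upwards [this.mem_nhds (by simp only [mem_setOf_eq]; linarith)] with x hx
        exact le_of_lt hx
      exact htend.eventually h11
    obtain ⟨u, hu, hsub2⟩ := mem_nhdsGT_iff_exists_Ioc_subset.1 (hev2.and hev)
    have hc : a < min u b := lt_min hu hab
    have hL2 : 0 < L ^ 2 := by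
      have h14 : 0 < |L| * |L| := mul_pos hLpos hLpos
      rw [abs_mul_abs_self] at h14
      nlinarith
    refine not_integrable_inv_shift hc (mul_pos (by linarith : (0:ℝ) < L^2/4)
      (inv_pos.2 (pow_pos (by linarith : (0:ℝ) < b - a) 2)))
      (hint.mono_set (Ioo_subset_Ioo_right (min_le_right u b))) (fun s hs => ?_)
    obtain ⟨hs7, hs8⟩ := hsub2 ⟨hs.1, hs.2.le.trans (min_le_left u b)⟩
    have hsa : 0 < s - a := by linarith [hs.1]
    have hsb : s - a ≤ b - a := by linarith [hs8.2]
    have k0 : L^2/4 ≤ φ s ^ 2 := by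
      have h15 := mul_self_le_mul_self (by positivity) hs7
      rw [abs_mul_abs_self] at h15
      nlinarith [abs_mul_abs_self L]
    have k1 : ((b-a)^2)⁻¹ ≤ ((s-a)^2)⁻¹ := by
      apply inv_anti₀ (pow_pos hsa 2) (by nlinarith)
    have k2 : L^2/4 * ((b-a)^2)⁻¹ ≤ φ s ^ 2 * ((s-a)^2)⁻¹ :=
      mul_le_mul k0 k1 (by positivity) (sq_nonneg _)
    have k3 : φ s ^ 2 * ((s-a)^2)⁻¹ * (s-a)⁻¹ = φ s ^ 2 / (s-a)^3 := by
      rw [mul_assoc, ← mul_inv, ← pow_succ, div_eq_mul_inv]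
    calc L^2/4 * ((b-a)^2)⁻¹ * (s-a)⁻¹ ≤ φ s ^ 2 * ((s-a)^2)⁻¹ * (s-a)⁻¹ :=
          mul_le_mul_of_nonneg_right k2 (inv_nonneg.2 hsa.le)
      _ = φ s ^ 2 / (s-a)^3 := k3
  rw [hL0] at htend hrep
  have hrep0 : ∀ s ∈ Ioc a b, φ s = ∫ t in a..s, φ' t := by
    intro s hs
    have := hrep s hs
    simpa using this
  -- Step 7 : refined bound and φ'' integrable
  have hφ_lin : ∀ s ∈ Ioc a b, |φ s| ≤ D * (s - a) + E * (2 * (s - a) ^ ((1/2):ℝ)) := by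
    intro s hs
    have hsa : 0 < s - a := by linarith [hs.1]
    rw [hrep0 s hs]
    have hb2 : |∫ t in a..s, φ' t| ≤ |∫ t in a..s, (D + E * (t - a) ^ (-(1/2):ℝ))| := by
      rw [← Real.norm_eq_abs (∫ t in a..s, φ' t)]
      refine intervalIntegral.norm_integral_le_abs_of_norm_le ?_
        (intervalIntegrable_const.add ((hintpow a s).const_mul E))
      refine (ae_restrict_iff' measurableSet_uIoc).2 (Eventually.of_forall fun t ht => ?_)
      rw [uIoc_of_le hs.1.le] at ht
      rw [Real.norm_eq_abs]
      exact hφ'bnd t ⟨ht.1, ht.2.trans hs.2⟩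
    have hval : ∫ t in a..s, (D + E * (t - a) ^ (-(1/2):ℝ))
        = D * (s - a) + E * (2 * (s - a) ^ ((1/2):ℝ)) := by
      rw [intervalIntegral.integral_add intervalIntegrable_const ((hintpow a s).const_mul E),
        intervalIntegral.integral_const, intervalIntegral.integral_const_mul,
        shift_integral_rpow a (by norm_num)]
      rw [sub_self, Real.zero_rpow (by norm_num)]
      norm_num
      ring
    rw [hval] at hb2
    refine hb2.trans ?_
    rw [abs_of_nonneg (by positivity)]
  have hφ''bnd2 : ∀ s ∈ Ioc a b, |φ'' s| ≤ C * D + 2 * C * E * (s - a) ^ (-(1/2):ℝ) := by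
    intro s hs
    have hsa : 0 < s - a := by linarith [hs.1]
    have e4 : (s - a) ^ ((1/2):ℝ) / (s - a) = (s - a) ^ (-(1/2):ℝ) := by
      have h12 := Real.rpow_sub hsa (1/2) 1
      rw [Real.rpow_one] at h12
      rw [← h12]
      norm_num
    calc |φ'' s| ≤ C * |φ s| / (s - a) := hbnd s hs
      _ ≤ C * (D * (s - a) + E * (2 * (s - a) ^ ((1/2):ℝ))) / (s - a) := by
          gcongr
          exact hφ_lin s hs
      _ = C * D * ((s-a)/(s-a)) + 2 * C * E * ((s - a) ^ ((1/2):ℝ) / (s - a)) := by ring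
      _ = C * D + 2 * C * E * (s - a) ^ (-(1/2):ℝ) := by
          rw [div_self hsa.ne', e4, mul_one]
  have hφ''int : IntegrableOn φ'' (Ioc a b) := by
    have hdomint2 : IntegrableOn (fun t => C * D + 2 * C * E * (t - a) ^ (-(1/2):ℝ)) (Ioc a b) := by
      rw [← intervalIntegrable_iff_integrableOn_Ioc_of_le hab.le]
      exact intervalIntegrable_const.add ((hintpow a b).const_mul _)
    refine hdomint2.mono' (h2c.aestronglyMeasurable measurableSet_Ioc) ?_
    refine (ae_restrict_iff' measurableSet_Ioc).2 (Eventually.of_forall fun s hs => ?_)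
    rw [Real.norm_eq_abs]
    exact hφ''bnd2 s hs
  -- Step 8 : limit of φ'
  obtain ⟨hrep', htend'⟩ := primitive_limit hab h2 h2c hφ''int
  set L' := φ' b - ∫ t in a..b, φ'' t with hL'def
  clear_value L'
  -- Step 9 : L' = 0
  have hL'0 : L' = 0 := by
    by_contra hL'
    have hL'pos : 0 < |L'| := abs_pos.2 hL'
    have hev3 : ∀ᶠ t in 𝓝[>] a, |φ' t - L'| ≤ |L'| / 4 := by
      have := Metric.tendsto_nhds.mp htend' (|L'|/4) (by positivity)
      filter_upwards [this] with t ht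
      rw [Real.dist_eq] at ht
      exact ht.le
    obtain ⟨u, hu, hsub3⟩ := mem_nhdsGT_iff_exists_Ioc_subset.1 (hev3.and hev)
    have hc : a < min u b := lt_min hu hab
    have hL'2 : 0 < L' ^ 2 := by
      have h14 : 0 < |L'| * |L'| := mul_pos hL'pos hL'pos
      rw [abs_mul_abs_self] at h14
      nlinarith
    refine not_integrable_inv_shift hc (by linarith : (0:ℝ) < L'^2/4)
      (hint.mono_set (Ioo_subset_Ioo_right (min_le_right u b))) (fun s hs => ?_)
    have hs' : s ∈ Ioc a u := ⟨hs.1, hs.2.le.trans (min_le_left u b)⟩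
    have hsb' : s ∈ Ioc a b := ⟨hs.1, hs.2.le.trans (min_le_right u b)⟩
    have hsa : 0 < s - a := by linarith [hs.1]
    have int1 : IntervalIntegrable φ' volume a s := by
      rw [intervalIntegrable_iff_integrableOn_Ioc_of_le hsb'.1.le]
      exact hφ'int.mono_set (Ioc_subset_Ioc_right hsb'.2)
    have hdiff : φ s - L' * (s - a) = ∫ t in a..s, (φ' t - L') := by
      rw [intervalIntegral.integral_sub int1 intervalIntegrable_const,
        intervalIntegral.integral_const, hrep0 s hsb']
      rw [smul_eq_mul]
      ring
    have hsmall : |φ s - L' * (s - a)| ≤ |L'|/4 * (s - a) := by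
      rw [hdiff]
      have := intervalIntegral.norm_integral_le_of_norm_le_const
        (C := |L'|/4) (f := fun t => φ' t - L') (a := a) (b := s) ?_
      · rwa [Real.norm_eq_abs, abs_of_nonneg hsa.le] at this
      · intro x hx
        rw [uIoc_of_le hsb'.1.le] at hx
        exact (hsub3 ⟨hx.1, hx.2.trans hs'.2⟩).1
    have hlow : |L'|/2 * (s - a) ≤ |φ s| := by
      have h13 : |L' * (s - a)| - |φ s - L' * (s - a)| ≤ |φ s| := by
        have := abs_sub_abs_le_abs_sub (L' * (s - a)) (L' * (s - a) - φ s)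
        simp only [sub_sub_cancel] at this
        rw [abs_sub_comm] at this
        linarith
      rw [abs_mul, abs_of_nonneg hsa.le] at h13
      nlinarith
    have k0 : L'^2/4 * (s-a)^2 ≤ φ s ^ 2 := by
      have h15 := mul_self_le_mul_self (by positivity) hlow
      rw [abs_mul_abs_self] at h15
      nlinarith [abs_mul_abs_self L', abs_nonneg L', mul_pos hL'pos hL'pos]
    have e : (s-a)⁻¹ * (s-a)^3 = (s-a)^2 := by
      rw [pow_succ', ← mul_assoc, inv_mul_cancel₀ hsa.ne', one_mul]
    rw [le_div_iff₀ (pow_pos hsa 3), mul_assoc, e]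
    exact k0
  rw [hL'0] at htend'
  exact ⟨htend, htend'⟩


set_option maxHeartbeats 1000000 in
/-- **Endpoint vanishing** (from the proof of Theorem 2.12): let `u ∈ C²([y₁,y₂])` with
`u(y₁) = u_min` and `u'(y₁) ≠ 0`, and let `α > 0`, `β ∈ ℝ`.  Then there is
`δ₀ ∈ (0, y₂−y₁)` such that for every `δ ∈ (0,δ₀]`: any `C²` solution `φ` of
`−φ'' + ((u''−β)/(u−u_min))φ = −α²φ` on `(y₁, y₁+δ]` with
`∫_{y₁}^{y₁+δ} φ²/(y−y₁)³ dy < ∞` satisfies `φ(y) → 0` and `φ'(y) → 0` as `y → y₁⁺`. -/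
theorem solution_vanishes_at_endpoint
    (y₁ y₂ : ℝ) (hy : y₁ < y₂) (u u' u'' : ℝ → ℝ)
    (hu1 : ∀ y ∈ Set.Icc y₁ y₂, HasDerivWithinAt u (u' y) (Set.Icc y₁ y₂) y)
    (hu2 : ∀ y ∈ Set.Icc y₁ y₂, HasDerivWithinAt u' (u'' y) (Set.Icc y₁ y₂) y)
    (hu2c : ContinuousOn u'' (Set.Icc y₁ y₂))
    (humin : ∀ y ∈ Set.Icc y₁ y₂, u y₁ ≤ u y)
    (hu'0 : u' y₁ ≠ 0)
    (α β : ℝ) (hα : 0 < α) :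
    ∃ δ₀ ∈ Set.Ioo (0 : ℝ) (y₂ - y₁), ∀ δ ∈ Set.Ioc (0 : ℝ) δ₀,
      ∀ φ φ' φ'' : ℝ → ℝ,
        (∀ y ∈ Set.Ioc y₁ (y₁ + δ),
          HasDerivWithinAt φ (φ' y) (Set.Ioc y₁ (y₁ + δ)) y) →
        (∀ y ∈ Set.Ioc y₁ (y₁ + δ),
          HasDerivWithinAt φ' (φ'' y) (Set.Ioc y₁ (y₁ + δ)) y) →
        ContinuousOn φ'' (Set.Ioc y₁ (y₁ + δ)) →
        (∀ y ∈ Set.Ioc y₁ (y₁ + δ),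
          -φ'' y + ((u'' y - β) / (u y - u y₁)) * φ y = -α ^ 2 * φ y) →
        IntegrableOn (fun y => (φ y) ^ 2 / (y - y₁) ^ 3) (Set.Ioo y₁ (y₁ + δ)) →
        Tendsto φ (𝓝[>] y₁) (𝓝 0) ∧ Tendsto φ' (𝓝[>] y₁) (𝓝 0) := by
  have hy₁Icc : y₁ ∈ Icc y₁ y₂ := ⟨le_rfl, hy.le⟩
  -- u'(y₁) > 0
  have hd : 0 < u' y₁ := by
    have htendsl := hasDerivWithinAt_iff_tendsto_slope.1 (hu1 y₁ hy₁Icc)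
    rw [Icc_diff_left, nhdsWithin_Ioc_eq_nhdsGT hy] at htendsl
    have hnn : 0 ≤ u' y₁ := by
      refine ge_of_tendsto htendsl ?_
      have hev : ∀ᶠ z in 𝓝[>] y₁, z ∈ Ioc y₁ y₂ := by
        rw [← nhdsWithin_Ioc_eq_nhdsGT hy]; exact self_mem_nhdsWithin
      filter_upwards [hev] with z hz
      rw [slope_def_field]
      exact div_nonneg (by linarith [humin z ⟨hz.1.le, hz.2⟩]) (by linarith [hz.1])
    exact hnn.lt_of_ne (Ne.symm hu'0)
  have hucont : ContinuousOn u (Icc y₁ y₂) := fun z hz => (hu1 z hz).continuousWithinAt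
  have hu'cont : ContinuousOn u' (Icc y₁ y₂) := fun z hz => (hu2 z hz).continuousWithinAt
  -- neighbourhood where u' ≥ u'(y₁)/2
  obtain ⟨δ₂, hδ₂, hδ₂prop⟩ := Metric.continuousWithinAt_iff.1 (hu'cont y₁ hy₁Icc)
    (u' y₁ / 2) (by linarith)
  set δ₁ := δ₂ / 2 with hδ₁def
  have hδ₁ : 0 < δ₁ := by positivity
  have hu'ge : ∀ x ∈ Icc y₁ y₂, x ≤ y₁ + δ₁ → u' y₁ / 2 ≤ u' x := by
    intro x hx hxd
    have hdist : dist x y₁ < δ₂ := by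
      rw [Real.dist_eq, abs_of_nonneg (by linarith [hx.1])]
      linarith
    have := hδ₂prop hx hdist
    rw [Real.dist_eq, abs_lt] at this
    linarith [this.1]
  -- lower bound u y - u y₁ ≥ (u' y₁ / 2) (y - y₁)
  set m := min (y₁ + δ₁) y₂ with hmdef
  have hm1 : y₁ < m := lt_min (by linarith) hy
  have hmonov : MonotoneOn (fun t => u t - u' y₁ / 2 * t) (Icc y₁ m) := by
    have hder2 : ∀ x ∈ Ioo y₁ m, HasDerivAt (fun t => u t - u' y₁ / 2 * t)
        (u' x - u' y₁ / 2) x := by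
      intro x hx
      have hxy2 : x < y₂ := hx.2.trans_le (min_le_right _ _)
      have hxIcc : x ∈ Icc y₁ y₂ := ⟨hx.1.le, hxy2.le⟩
      have hmem : Icc y₁ y₂ ∈ 𝓝 x := Icc_mem_nhds hx.1 hxy2
      have := ((hu1 x hxIcc).hasDerivAt hmem).sub (((hasDerivAt_id x).const_mul (u' y₁ / 2)))
      exact this.congr_deriv (by ring)
    refine monotoneOn_of_deriv_nonneg (convex_Icc _ _) ?_ ?_ ?_
    · exact (hucont.mono (Icc_subset_Icc_right (min_le_right _ _))).sub
        ((continuous_const.mul continuous_id).continuousOn)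
    · intro x hx
      rw [interior_Icc] at hx
      exact (hder2 x hx).differentiableAt.differentiableWithinAt
    · intro x hx
      rw [interior_Icc] at hx
      rw [(hder2 x hx).deriv]
      have hxy2 : x < y₂ := hx.2.trans_le (min_le_right _ _)
      have := hu'ge x ⟨hx.1.le, hxy2.le⟩ (le_of_lt (hx.2.trans_le (min_le_left _ _)))
      linarith
  have hlow : ∀ z ∈ Icc y₁ m, u' y₁ / 2 * (z - y₁) ≤ u z - u y₁ := by
    intro z hz
    have := hmonov (left_mem_Icc.2 hm1.le) hz hz.1
    simp only at this
    nlinarith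
  -- bound for u'' - β
  obtain ⟨K, hK⟩ := (isCompact_Icc).exists_bound_of_continuousOn (hu2c.sub continuousOn_const)
  have hK0 : 0 ≤ K := le_trans (norm_nonneg _) (hK y₁ hy₁Icc)
  -- constants
  set C0 := 2 * K / u' y₁ + α ^ 2 * (y₂ - y₁) with hC0def
  have hC0 : 0 ≤ C0 := add_nonneg (div_nonneg (by linarith) hd.le)
    (mul_nonneg (by positivity) (by linarith))
  refine ⟨min δ₁ (min ((y₂ - y₁)/2) (1/(2*(C0+1)))), ⟨lt_min hδ₁ (lt_min (by linarith)
    (by positivity)), ?_⟩, ?_⟩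
  · calc min δ₁ (min ((y₂ - y₁)/2) (1/(2*(C0+1)))) ≤ (y₂ - y₁)/2 :=
        (min_le_right _ _).trans (min_le_left _ _)
      _ < y₂ - y₁ := by linarith
  intro δ hδ φ φ' φ'' hφ1 hφ2 hφ2c hode hint
  have hδ0 : 0 < δ := hδ.1
  have hδδ₁ : δ ≤ δ₁ := hδ.2.trans (min_le_left _ _)
  have hδy₂ : δ ≤ (y₂ - y₁)/2 := hδ.2.trans ((min_le_right _ _).trans (min_le_left _ _))
  have hδC : δ ≤ 1/(2*(C0+1)) := hδ.2.trans ((min_le_right _ _).trans (min_le_right _ _))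
  have hab : y₁ < y₁ + δ := by linarith
  have hsubIcc : Ioc y₁ (y₁ + δ) ⊆ Icc y₁ y₂ := fun z hz => ⟨hz.1.le, by linarith [hz.2]⟩
  have key := aux_main hab hC0 ?_ hφ1 hφ2 hφ2c ?_ hint
  · exact key
  · -- C0 * (y₁ + δ - y₁) ≤ 1/2
    have h16 : y₁ + δ - y₁ = δ := by ring
    rw [h16]
    have h17 : C0 * δ ≤ C0 * (1/(2*(C0+1))) := mul_le_mul_of_nonneg_left hδC hC0
    have h18 : C0 * (1/(2*(C0+1))) ≤ 1/2 := by
      rw [mul_one_div, div_le_iff₀ (by linarith : (0:ℝ) < 2*(C0+1))]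
      linarith
    linarith
  · -- the pointwise bound
    intro z hz
    have hzIcc : z ∈ Icc y₁ y₂ := hsubIcc hz
    have ht : 0 < z - y₁ := by linarith [hz.1]
    have hty₂ : z - y₁ ≤ y₂ - y₁ := by linarith [hzIcc.2]
    have hzm : z ∈ Icc y₁ m := ⟨hz.1.le, le_min (by linarith [hz.2]) hzIcc.2⟩
    have hw : u' y₁ / 2 * (z - y₁) ≤ u z - u y₁ := hlow z hzm
    have hwpos : 0 < u z - u y₁ := lt_of_lt_of_le (by positivity) hw
    have heq' : φ'' z = (u'' z - β) / (u z - u y₁) * φ z + α ^ 2 * φ z := by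
      have := hode z hz
      linarith
    have b1 : |(u'' z - β) / (u z - u y₁) * φ z| ≤ (2 * K / u' y₁) * |φ z| / (z - y₁) := by
      rw [abs_mul, abs_div, abs_of_pos hwpos]
      have hKz : |u'' z - β| ≤ K := by
        have := hK z hzIcc
        rwa [Real.norm_eq_abs] at this
      have h19 : |u'' z - β| / (u z - u y₁) ≤ K / (u' y₁ / 2 * (z - y₁)) :=
        div_le_div₀ hK0 hKz (by positivity) hw
      have h20 : K / (u' y₁ / 2 * (z - y₁)) = (2 * K / u' y₁) / (z - y₁) := by
        field_simp
      calc |u'' z - β| / (u z - u y₁) * |φ z| ≤ K / (u' y₁ / 2 * (z - y₁)) * |φ z| :=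
            mul_le_mul_of_nonneg_right h19 (abs_nonneg _)
        _ = (2 * K / u' y₁) / (z - y₁) * |φ z| := by rw [h20]
        _ = (2 * K / u' y₁) * |φ z| / (z - y₁) := by ring
    have b2 : |α ^ 2 * φ z| ≤ α ^ 2 * (y₂ - y₁) * |φ z| / (z - y₁) := by
      rw [abs_mul, abs_of_nonneg (by positivity : (0:ℝ) ≤ α ^ 2)]
      have h21 : α ^ 2 * |φ z| = α ^ 2 * (z - y₁) * |φ z| / (z - y₁) := by
        have hne : z - y₁ ≠ 0 := ht.ne'
        field_simp
      rw [h21]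
      gcongr
    have hsplit : C0 * |φ z| / (z - y₁)
        = (2 * K / u' y₁) * |φ z| / (z - y₁) + α ^ 2 * (y₂ - y₁) * |φ z| / (z - y₁) := by
      rw [hC0def]
      ring
    calc |φ'' z| = |(u'' z - β) / (u z - u y₁) * φ z + α ^ 2 * φ z| := by rw [heq']
      _ ≤ |(u'' z - β) / (u z - u y₁) * φ z| + |α ^ 2 * φ z| := abs_add_le _ _
      _ ≤ (2 * K / u' y₁) * |φ z| / (z - y₁) + α ^ 2 * (y₂ - y₁) * |φ z| / (z - y₁) :=
          add_le_add b1 b2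
      _ = C0 * |φ z| / (z - y₁) := hsplit.symm
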